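/- Let p ≥ 1 and let E₁,…,Eₙ be normed spaces over 𝕂. Then σ_p(x₁⊗⋯⊗xₙ) = ‖x₁‖⋯‖xₙ‖ for all x_l ∈ E_l, and ε_n(u) ≤ σ_p(u) for every u ∈ E₁⊗⋯⊗Eₙ; in particular σ_p(u) = 0 implies u = 0, so σ_p is a norm (a reasonable crossnorm) on E₁⊗⋯⊗Eₙ. -/

import Mathlib

open scoped TensorProduct
open PiTensorProduct

/-- The `ℓ_q` norm of a finite family of scalars, where `q` is the conjugate exponent
of `p` (`1/p + 1/q = 1`, with `q = ∞`, i.e. the sup norm, when `p = 1`). -/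
noncomputable def lqNorm {𝕜 : Type*} [RCLike 𝕜] (p : ℝ) {m : ℕ} (lam : Fin m → 𝕜) : ℝ :=
  if p = 1 then ⨆ j, ‖lam j‖ else (∑ j, ‖lam j‖ ^ (p / (p - 1))) ^ ((p - 1) / p)

/-- `sup_{‖φ_l‖ ≤ 1} Σ_j |φ₁(x_{1,j}) ⋯ φₙ(x_{n,j})|^p`. -/
noncomputable def supTerm (𝕜 : Type*) [RCLike 𝕜] {n : ℕ} {E : Fin n → Type*}
    [∀ i, NormedAddCommGroup (E i)] [∀ i, NormedSpace 𝕜 (E i)]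
    (p : ℝ) {m : ℕ} (x : Fin m → Π i, E i) : ℝ :=
  ⨆ φ : {φ : Π i, E i →L[𝕜] 𝕜 // ∀ i, ‖φ i‖ ≤ 1},
    ∑ j, (∏ i, ‖φ.1 i (x j i)‖) ^ p

/-- The tensor norm `σ_p` on `E₁ ⊗ ⋯ ⊗ Eₙ`. -/
noncomputable def sigmaNorm {𝕜 : Type*} [RCLike 𝕜] {n : ℕ} {E : Fin n → Type*}
    [∀ i, NormedAddCommGroup (E i)] [∀ i, NormedSpace 𝕜 (E i)]
    (p : ℝ) (u : ⨂[𝕜] i, E i) : ℝ :=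
  sInf { r : ℝ | ∃ (m : ℕ) (lam : Fin m → 𝕜) (x : Fin m → Π i, E i),
    u = (∑ j, lam j • ⨂ₜ[𝕜] i, x j i) ∧
    r = lqNorm p lam * (supTerm 𝕜 p x) ^ (1/p) }

/-- The functional on `E₁ ⊗ ⋯ ⊗ Eₙ` induced by functionals `φ i ∈ E i'`. -/
noncomputable def dualFunctional {𝕜 : Type*} [RCLike 𝕜] {n : ℕ} {E : Fin n → Type*}
    [∀ i, NormedAddCommGroup (E i)] [∀ i, NormedSpace 𝕜 (E i)]
    (φ : Π i, E i →L[𝕜] 𝕜) : (⨂[𝕜] i, E i) →ₗ[𝕜] 𝕜 :=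
  PiTensorProduct.lift
    ((ContinuousMultilinearMap.mkPiAlgebra 𝕜 (Fin n) 𝕜).compContinuousLinearMap φ).toMultilinearMap

/-- The injective norm `ε_n` on `E₁ ⊗ ⋯ ⊗ Eₙ`. -/
noncomputable def injNorm {𝕜 : Type*} [RCLike 𝕜] {n : ℕ} {E : Fin n → Type*}
    [∀ i, NormedAddCommGroup (E i)] [∀ i, NormedSpace 𝕜 (E i)]
    (u : ⨂[𝕜] i, E i) : ℝ :=
  ⨆ φ : {φ : Π i, E i →L[𝕜] 𝕜 // ∀ i, ‖φ i‖ ≤ 1}, ‖dualFunctional φ.1 u‖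

section Aux

variable {𝕜 : Type*} [RCLike 𝕜] {n : ℕ} {E : Fin n → Type*}
    [∀ i, NormedAddCommGroup (E i)] [∀ i, NormedSpace 𝕜 (E i)]

instance : Nonempty {φ : Π i, E i →L[𝕜] 𝕜 // ∀ i, ‖φ i‖ ≤ 1} :=
  ⟨⟨fun _ => 0, fun i => by simp⟩⟩

lemma dualFunctional_tprod (φ : Π i, E i →L[𝕜] 𝕜) (x : Π i, E i) :
    dualFunctional φ (⨂ₜ[𝕜] i, x i) = ∏ i, φ i (x i) := by
  simp [dualFunctional]

lemma dualFunctional_sum (φ : Π i, E i →L[𝕜] 𝕜) {m : ℕ} (lam : Fin m → 𝕜)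
    (x : Fin m → Π i, E i) :
    dualFunctional φ (∑ j, lam j • ⨂ₜ[𝕜] i, x j i) = ∑ j, lam j * ∏ i, φ i (x j i) := by
  rw [map_sum]
  simp [dualFunctional, smul_eq_mul]

lemma exists_rep (u : ⨂[𝕜] i, E i) :
    ∃ (m : ℕ) (lam : Fin m → 𝕜) (x : Fin m → Π i, E i),
      u = ∑ j, lam j • ⨂ₜ[𝕜] i, x j i := by
  refine PiTensorProduct.induction_on u ?_ ?_
  · intro r f
    exact ⟨1, fun _ => r, fun _ => f, by simp⟩
  · rintro v w ⟨m₁, l₁, x₁, h₁⟩ ⟨m₂, l₂, x₂, h₂⟩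
    refine ⟨m₁ + m₂, Fin.append l₁ l₂, Fin.append x₁ x₂, ?_⟩
    rw [Fin.sum_univ_add]
    simp [Fin.append_left, Fin.append_right, h₁, h₂]

lemma dualFunctional_smul (c : Π i, 𝕜) (φ : Π i, E i →L[𝕜] 𝕜) (u : ⨂[𝕜] i, E i) :
    dualFunctional (fun i => c i • φ i) u = (∏ i, c i) * dualFunctional φ u := by
  have h : dualFunctional (fun i => c i • φ i) = (∏ i, c i) • dualFunctional φ := by
    ext v
    simp [dualFunctional, Finset.prod_mul_distrib, smul_eq_mul]
  rw [h]; simp [smul_eq_mul]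

lemma prod_apply_le (φ : {φ : Π i, E i →L[𝕜] 𝕜 // ∀ i, ‖φ i‖ ≤ 1}) (v : Π i, E i) :
    ∏ i, ‖φ.1 i (v i)‖ ≤ ∏ i, ‖v i‖ := by
  refine Finset.prod_le_prod (fun i _ => norm_nonneg _) (fun i _ => ?_)
  exact ((φ.1 i).le_opNorm _).trans (mul_le_of_le_one_left (norm_nonneg _) (φ.2 i))

lemma term_le {p : ℝ} (hp : 1 ≤ p) {m : ℕ} (x : Fin m → Π i, E i)
    (φ : {φ : Π i, E i →L[𝕜] 𝕜 // ∀ i, ‖φ i‖ ≤ 1}) :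
    ∑ j, (∏ i, ‖φ.1 i (x j i)‖) ^ p ≤ ∑ j, (∏ i, ‖x j i‖) ^ p :=
  Finset.sum_le_sum fun j _ => Real.rpow_le_rpow
    (Finset.prod_nonneg fun i _ => norm_nonneg _) (prod_apply_le φ (x j)) (by linarith)

lemma supTerm_bddAbove {p : ℝ} (hp : 1 ≤ p) {m : ℕ} (x : Fin m → Π i, E i) :
    BddAbove (Set.range fun φ : {φ : Π i, E i →L[𝕜] 𝕜 // ∀ i, ‖φ i‖ ≤ 1} =>
      ∑ j, (∏ i, ‖φ.1 i (x j i)‖) ^ p) :=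
  ⟨∑ j, (∏ i, ‖x j i‖) ^ p, by rintro r ⟨φ, rfl⟩; exact term_le hp x φ⟩

lemma le_supTerm {p : ℝ} (hp : 1 ≤ p) {m : ℕ} (x : Fin m → Π i, E i)
    (φ : {φ : Π i, E i →L[𝕜] 𝕜 // ∀ i, ‖φ i‖ ≤ 1}) :
    ∑ j, (∏ i, ‖φ.1 i (x j i)‖) ^ p ≤ supTerm 𝕜 p x :=
  le_ciSup (supTerm_bddAbove hp x) φ

lemma supTerm_nonneg {p : ℝ} {m : ℕ} (x : Fin m → Π i, E i) :
    0 ≤ supTerm 𝕜 p x :=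
  Real.iSup_nonneg fun _ => Finset.sum_nonneg fun _ _ =>
    Real.rpow_nonneg (Finset.prod_nonneg fun _ _ => norm_nonneg _) _

lemma lqNorm_nonneg {p : ℝ} {m : ℕ} (lam : Fin m → 𝕜) : 0 ≤ lqNorm p lam := by
  unfold lqNorm
  split
  · exact Real.iSup_nonneg fun j => norm_nonneg _
  · exact Real.rpow_nonneg
      (Finset.sum_nonneg fun j _ => Real.rpow_nonneg (norm_nonneg _) _) _

lemma holder_key {p : ℝ} (hp : 1 ≤ p) {m : ℕ} (lam : Fin m → 𝕜) (x : Fin m → Π i, E i)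
    (φ : {φ : Π i, E i →L[𝕜] 𝕜 // ∀ i, ‖φ i‖ ≤ 1}) :
    ‖∑ j, lam j * ∏ i, φ.1 i (x j i)‖ ≤ lqNorm p lam * (supTerm 𝕜 p x) ^ (1/p) := by
  set a : Fin m → ℝ := fun j => ∏ i, ‖φ.1 i (x j i)‖ with ha
  have ha0 : ∀ j, 0 ≤ a j := fun j => Finset.prod_nonneg fun i _ => norm_nonneg _
  have h1 : ‖∑ j, lam j * ∏ i, φ.1 i (x j i)‖ ≤ ∑ j, ‖lam j‖ * a j := by
    refine (norm_sum_le _ _).trans (le_of_eq ?_)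
    refine Finset.sum_congr rfl fun j _ => ?_
    rw [norm_mul, norm_prod]
  refine h1.trans ?_
  rcases eq_or_lt_of_le hp with hp1 | hp1
  · -- p = 1
    subst hp1
    rw [lqNorm, if_pos rfl]
    have hbdd : BddAbove (Set.range fun j => ‖lam j‖) := (Set.finite_range _).bddAbove
    have hL0 : 0 ≤ ⨆ j, ‖lam j‖ := Real.iSup_nonneg fun j => norm_nonneg _
    have step1 : ∑ j, ‖lam j‖ * a j ≤ (⨆ j, ‖lam j‖) * ∑ j, a j := by
      rw [Finset.mul_sum]
      exact Finset.sum_le_sum fun j _ =>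
        mul_le_mul_of_nonneg_right (le_ciSup hbdd j) (ha0 j)
    refine step1.trans (mul_le_mul_of_nonneg_left ?_ hL0)
    have : ∑ j, a j = ∑ j, a j ^ (1:ℝ) :=
      Finset.sum_congr rfl fun j _ => (Real.rpow_one _).symm
    rw [this]
    have h2 := le_supTerm (le_refl (1:ℝ)) x φ
    rw [show (1:ℝ)/1 = 1 by norm_num, Real.rpow_one]
    exact h2
  · -- 1 < p
    have hpq : p.HolderConjugate (p / (p - 1)) := Real.HolderConjugate.conjExponent hp1
    have h2 : ∑ j, ‖lam j‖ * a j ≤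
        (∑ j, |a j| ^ p) ^ (1/p) * (∑ j, |‖lam j‖| ^ (p/(p-1))) ^ (1/(p/(p-1))) := by
      have := Real.inner_le_Lp_mul_Lq (Finset.univ) a (fun j => ‖lam j‖) hpq
      calc ∑ j, ‖lam j‖ * a j = ∑ j, a j * ‖lam j‖ :=
            Finset.sum_congr rfl fun j _ => mul_comm _ _
        _ ≤ _ := this
    refine h2.trans ?_
    have e1 : (∑ j, |‖lam j‖| ^ (p/(p-1))) ^ (1/(p/(p-1))) = lqNorm p lam := by
      rw [lqNorm, if_neg (by linarith), one_div_div]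
      congr 1
      exact Finset.sum_congr rfl fun j _ => by rw [abs_norm]
    have e2 : (∑ j, |a j| ^ p) ^ (1/p) ≤ (supTerm 𝕜 p x) ^ (1/p) := by
      refine Real.rpow_le_rpow (Finset.sum_nonneg fun j _ => Real.rpow_nonneg (abs_nonneg _) _)
        ?_ (by positivity)
      refine le_trans (le_of_eq ?_) (le_supTerm hp x φ)
      exact Finset.sum_congr rfl fun j _ => by rw [abs_of_nonneg (ha0 j)]
    rw [e1, mul_comm]
    exact mul_le_mul_of_nonneg_left e2 (lqNorm_nonneg lam)

lemma sigma_set_nonempty (p : ℝ) (u : ⨂[𝕜] i, E i) :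
    { r : ℝ | ∃ (m : ℕ) (lam : Fin m → 𝕜) (x : Fin m → Π i, E i),
      u = (∑ j, lam j • ⨂ₜ[𝕜] i, x j i) ∧
      r = lqNorm p lam * (supTerm 𝕜 p x) ^ (1/p) }.Nonempty := by
  obtain ⟨m, lam, x, hu⟩ := exists_rep u
  exact ⟨_, m, lam, x, hu, rfl⟩

lemma sigma_set_bddBelow (p : ℝ) (u : ⨂[𝕜] i, E i) :
    BddBelow { r : ℝ | ∃ (m : ℕ) (lam : Fin m → 𝕜) (x : Fin m → Π i, E i),
      u = (∑ j, lam j • ⨂ₜ[𝕜] i, x j i) ∧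
      r = lqNorm p lam * (supTerm 𝕜 p x) ^ (1/p) } := by
  refine ⟨0, ?_⟩
  rintro r ⟨m, lam, x, -, rfl⟩
  exact mul_nonneg (lqNorm_nonneg lam) (Real.rpow_nonneg (supTerm_nonneg x) _)

lemma inj_le_sigma {p : ℝ} (hp : 1 ≤ p) (u : ⨂[𝕜] i, E i) :
    injNorm u ≤ sigmaNorm p u := by
  refine le_csInf (sigma_set_nonempty p u) ?_
  rintro r ⟨m, lam, x, hu, rfl⟩
  refine ciSup_le fun φ => ?_
  rw [hu, dualFunctional_sum]
  exact holder_key hp lam x φ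

lemma pit_eq_zero_of_dual {n : ℕ} {F : Fin n → Type*}
    [∀ i, AddCommGroup (F i)] [∀ i, Module 𝕜 (F i)]
    {κ : Fin n → Type*} [∀ i, Fintype (κ i)] (b : ∀ i, Module.Basis (κ i) 𝕜 (F i))
    (u : ⨂[𝕜] i, F i)
    (h : ∀ f : Π i, F i →ₗ[𝕜] 𝕜,
      PiTensorProduct.lift ((MultilinearMap.mkPiAlgebra 𝕜 (Fin n) 𝕜).compLinearMap f) u = 0) :
    u = 0 := by
  classical
  have key : (LinearMap.id : (⨂[𝕜] i, F i) →ₗ[𝕜] ⨂[𝕜] i, F i) =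
      ∑ k : Π i, κ i,
        (PiTensorProduct.lift ((MultilinearMap.mkPiAlgebra 𝕜 (Fin n) 𝕜).compLinearMap
          (fun i => (b i).coord (k i)))).smulRight (⨂ₜ[𝕜] i, b i (k i)) := by
    ext z
    simp only [LinearMap.compMultilinearMap_apply, LinearMap.id_apply, LinearMap.sum_apply,
      LinearMap.smulRight_apply, PiTensorProduct.lift.tprod,
      MultilinearMap.compLinearMap_apply, MultilinearMap.mkPiAlgebra_apply, Module.Basis.coord_apply]
    calc (⨂ₜ[𝕜] i, z i)
        = ⨂ₜ[𝕜] i, (∑ k, (b i).repr (z i) k • b i k) := by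
          congr 1
          exact funext fun i => ((b i).sum_repr (z i)).symm
      _ = ∑ k : Π i, κ i, ⨂ₜ[𝕜] i, ((b i).repr (z i) (k i) • b i (k i)) :=
          MultilinearMap.map_sum _ _
      _ = ∑ k : Π i, κ i, (∏ i, (b i).repr (z i) (k i)) • ⨂ₜ[𝕜] i, b i (k i) :=
          Finset.sum_congr rfl fun k _ => MultilinearMap.map_smul_univ _ _ _
  have h2 := congrArg (fun L => L u) key
  simp only [LinearMap.id_apply, LinearMap.sum_apply, LinearMap.smulRight_apply] at h2
  rw [h2]
  refine Finset.sum_eq_zero fun k _ => ?_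
  rw [h fun i => (b i).coord (k i), zero_smul]

end Aux

/-- `σ_p` is a reasonable crossnorm: `σ_p(x₁ ⊗ ⋯ ⊗ xₙ) = ‖x₁‖ ⋯ ‖xₙ‖`, `ε_n ≤ σ_p`,
and in particular `σ_p(u) = 0` implies `u = 0`, so `σ_p` is a norm. -/
theorem sigmaNorm_crossnorm {𝕜 : Type*} [RCLike 𝕜] {n : ℕ} (hn : 1 ≤ n)
    (E : Fin n → Type*) [∀ i, NormedAddCommGroup (E i)] [∀ i, NormedSpace 𝕜 (E i)]
    (p : ℝ) (hp : 1 ≤ p) :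
    (∀ x : Π i, E i, sigmaNorm p (⨂ₜ[𝕜] i, x i) = ∏ i, ‖x i‖) ∧
    (∀ u : ⨂[𝕜] i, E i, injNorm u ≤ sigmaNorm p u) ∧
    (∀ u : ⨂[𝕜] i, E i, sigmaNorm p u = 0 → u = 0) := by
  have hp0 : p ≠ 0 := by linarith
  refine ⟨?_, fun u => inj_le_sigma hp u, ?_⟩
  · -- cross-norm property
    intro x
    refine le_antisymm ?_ ?_
    · -- upper bound via the trivial representation
      have hmem : lqNorm p (fun _ : Fin 1 => (1:𝕜)) *
          (supTerm 𝕜 p (fun _ : Fin 1 => x)) ^ (1/p) ∈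
          { r : ℝ | ∃ (m : ℕ) (lam : Fin m → 𝕜) (x' : Fin m → Π i, E i),
            (⨂ₜ[𝕜] i, x i) = (∑ j, lam j • ⨂ₜ[𝕜] i, x' j i) ∧
            r = lqNorm p lam * (supTerm 𝕜 p x') ^ (1/p) } :=
        ⟨1, fun _ => 1, fun _ => x, by simp, rfl⟩
      refine (csInf_le (sigma_set_bddBelow p _) hmem).trans ?_
      have h1 : lqNorm p (fun _ : Fin 1 => (1:𝕜)) = 1 := by
        unfold lqNorm
        split
        · simp [ciSup_const]
        · simp [Real.one_rpow]
      have h2 : supTerm 𝕜 p (fun _ : Fin 1 => x) ≤ (∏ i, ‖x i‖) ^ p := by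
        refine ciSup_le fun φ => ?_
        rw [Fin.sum_univ_one]
        exact Real.rpow_le_rpow (Finset.prod_nonneg fun i _ => norm_nonneg _)
          (prod_apply_le φ x) (by linarith)
      have h3 : (supTerm 𝕜 p (fun _ : Fin 1 => x)) ^ (1/p) ≤ ∏ i, ‖x i‖ := by
        have := Real.rpow_le_rpow (supTerm_nonneg _) h2 (by positivity : (0:ℝ) ≤ 1/p)
        rwa [← Real.rpow_mul (Finset.prod_nonneg fun i _ => norm_nonneg _),
          mul_one_div, div_self hp0, Real.rpow_one] at this
      rw [h1, one_mul]
      exact h3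
    · -- lower bound via norming functionals and the injective norm
      choose g hg1 hg2 using fun i => exists_dual_vector'' 𝕜 (x i)
      have hb : BddAbove (Set.range fun φ : {φ : Π i, E i →L[𝕜] 𝕜 // ∀ i, ‖φ i‖ ≤ 1} =>
          ‖dualFunctional φ.1 (⨂ₜ[𝕜] i, x i)‖) := by
        refine ⟨∏ i, ‖x i‖, ?_⟩
        rintro r ⟨φ, rfl⟩
        dsimp only
        rw [dualFunctional_tprod, norm_prod]
        exact prod_apply_le φ x
      have hle : ∏ i, ‖x i‖ ≤ injNorm (⨂ₜ[𝕜] i, x i) := by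
        refine le_trans (le_of_eq ?_) (le_ciSup hb ⟨g, hg1⟩)
        rw [dualFunctional_tprod, norm_prod]
        exact Finset.prod_congr rfl fun i _ => by
          rw [hg2 i, RCLike.norm_ofReal, abs_norm]
      exact hle.trans (inj_le_sigma hp _)
  · -- σ_p u = 0 → u = 0
    intro u h0
    obtain ⟨m, lam, x, hu⟩ := exists_rep u
    have hb : BddAbove (Set.range fun φ : {φ : Π i, E i →L[𝕜] 𝕜 // ∀ i, ‖φ i‖ ≤ 1} =>
        ‖dualFunctional φ.1 u‖) := by
      refine ⟨lqNorm p lam * (supTerm 𝕜 p x) ^ (1/p), ?_⟩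
      rintro r ⟨φ, rfl⟩
      dsimp only
      rw [hu, dualFunctional_sum]
      exact holder_key hp lam x φ
    have hz1 : ∀ φ : {φ : Π i, E i →L[𝕜] 𝕜 // ∀ i, ‖φ i‖ ≤ 1},
        dualFunctional φ.1 u = 0 := by
      intro φ
      have h1 : ‖dualFunctional φ.1 u‖ ≤ injNorm u := le_ciSup hb φ
      have h2 := inj_le_sigma hp u
      rw [h0] at h2
      exact norm_le_zero_iff.mp (h1.trans h2)
    have hz : ∀ φ : Π i, E i →L[𝕜] 𝕜, dualFunctional φ u = 0 := by
      intro φ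
      set c : Π i, 𝕜 := fun i => (((‖φ i‖ ⊔ 1 : ℝ)⁻¹ : ℝ) : 𝕜) with hc
      have hc0 : ∀ i, (0:ℝ) < ‖φ i‖ ⊔ 1 := fun i => lt_of_lt_of_le one_pos (le_max_right _ _)
      have hle : ∀ i, ‖c i • φ i‖ ≤ 1 := by
        intro i
        have hns : ‖c i • φ i‖ = ‖c i‖ * ‖φ i‖ := norm_smul (c i) (φ i)
        rw [hns, hc, RCLike.norm_ofReal, abs_of_nonneg (inv_nonneg.mpr (hc0 i).le),
          inv_mul_le_iff₀ (hc0 i), mul_one]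
        exact le_max_left _ _
      have hz0 := hz1 ⟨fun i => c i • φ i, hle⟩
      rw [dualFunctional_smul c φ u] at hz0
      have hcne : (∏ i, c i) ≠ 0 := by
        refine Finset.prod_ne_zero_iff.mpr fun i _ => ?_
        simp only [hc, ne_eq, RCLike.ofReal_eq_zero]
        exact inv_ne_zero (hc0 i).ne'
      exact (mul_eq_zero.mp hz0).resolve_left hcne
    -- pass to finite-dimensional subspaces and separate with a basis
    let F : Π i, Submodule 𝕜 (E i) := fun i => Submodule.span 𝕜 (Set.range fun j => x j i)
    haveI : ∀ i, FiniteDimensional 𝕜 (F i) := fun i =>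
      FiniteDimensional.span_of_finite 𝕜 (Set.finite_range _)
    let x' : Fin m → Π i, F i := fun j i => ⟨x j i, Submodule.subset_span ⟨j, rfl⟩⟩
    set u' : ⨂[𝕜] i, F i := ∑ j, lam j • ⨂ₜ[𝕜] i, x' j i with hu'
    have hmap : PiTensorProduct.map (fun i => (F i).subtype) u' = u := by
      rw [hu, hu', map_sum]
      refine Finset.sum_congr rfl fun j _ => ?_
      rw [map_smul, PiTensorProduct.map_tprod]
      rfl
    have hu'0 : u' = 0 := by
      refine pit_eq_zero_of_dual (fun i => Module.finBasis 𝕜 (F i)) u' ?_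
      intro f
      choose g hg _ using fun i =>
        exists_extension_norm_eq (𝕜 := 𝕜) (F i) (LinearMap.toContinuousLinearMap (f i))
      have hgf : ∀ i (v : F i), g i (v : E i) = f i v := by
        intro i v
        rw [hg i v]
        simp
      have hcalc : PiTensorProduct.lift
          ((MultilinearMap.mkPiAlgebra 𝕜 (Fin n) 𝕜).compLinearMap f) u' =
          dualFunctional g u := by
        rw [hu, dualFunctional_sum, hu', map_sum]
        refine Finset.sum_congr rfl fun j _ => ?_
        rw [map_smul, PiTensorProduct.lift.tprod]
        simp only [MultilinearMap.compLinearMap_apply, MultilinearMap.mkPiAlgebra_apply,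
          smul_eq_mul]
        congr 1
        exact Finset.prod_congr rfl fun i _ => (hgf i (x' j i)).symm
      rw [hcalc, hz g]
    rw [← hmap, hu'0, map_zero]
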